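/- Let v, U : ℝ → ℝ be Lipschitz, λ > 0, b > 0, and assume v(ρ₂) - v(ρ₁) ≤ -b(ρ₂-ρ₁) for ρ₂ ≥ ρ₁. Suppose X(·,t) solves ∂ₜX(z,t) = v(∫₀¹ U(X(z,t)-X(ζ,t))dζ - λz) with X(·,0) non-decreasing. Then for all t > 0 and 0 ≤ z₁ < z₂ ≤ 1, X(z₂,t) - X(z₁,t) ≥ (bλ(z₂-z₁)/(Lip(v)Lip(U)))·(1 - e^{-Lip(v)Lip(U)t}); in particular X(·,t) is strictly increasing for t > 0. -/

import Mathlib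

open Set MeasureTheory intervalIntegral

/-- Smoothing estimate for the quantile equation: if `X(·,0)` is non-decreasing then for
`t > 0` and `z₁ < z₂`,
`X(z₂,t) - X(z₁,t) ≥ (bλ(z₂-z₁)/(Lip(v)Lip(U))) (1 - e^{-Lip(v)Lip(U)t})`;
in particular `X(·,t)` is strictly increasing for `t > 0`. -/
theorem stmt_9 (Lv LU lam b : ℝ) (hLv : 0 < Lv) (hLU : 0 < LU) (hlam : 0 < lam) (hb : 0 < b)
    (v U : ℝ → ℝ)
    (hv : ∀ a b' : ℝ, |v a - v b'| ≤ Lv * |a - b'|)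
    (hU : ∀ a b' : ℝ, |U a - U b'| ≤ LU * |a - b'|)
    (hvdec : ∀ r₁ r₂ : ℝ, r₁ ≤ r₂ → v r₂ - v r₁ ≤ -b * (r₂ - r₁))
    (X : ℝ → ℝ → ℝ)
    (hode : ∀ z ∈ Set.Icc (0:ℝ) 1, ∀ t, 0 ≤ t →
      HasDerivAt (X z) (v ((∫ ζ in (0:ℝ)..1, U (X z t - X ζ t)) - lam * z)) t)
    (hinit : MonotoneOn (fun z => X z 0) (Set.Icc (0:ℝ) 1)) :
    ∀ t, 0 < t →
      (∀ z₁ z₂ : ℝ, 0 ≤ z₁ → z₁ < z₂ → z₂ ≤ 1 →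
        X z₂ t - X z₁ t ≥
          b * lam * (z₂ - z₁) / (Lv * LU) * (1 - Real.exp (-(Lv * LU) * t))) ∧
      StrictMonoOn (fun z => X z t) (Set.Icc (0:ℝ) 1) := by
  -- `b ≤ Lv`
  have hbLv : b ≤ Lv := by
    have h1 := hvdec 0 1 zero_le_one
    have h2 := hv 1 0
    have h3 : -(v 1 - v 0) ≤ |v 1 - v 0| := neg_le_abs _
    simp only [sub_zero, abs_one, mul_one] at h1 h2
    linarith
  -- `U` is continuous
  have hUcont : Continuous U := by
    have : LipschitzWith (Real.toNNReal LU) U := by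
      refine LipschitzWith.of_dist_le_mul fun x y => ?_
      rw [Real.dist_eq, Real.dist_eq, Real.coe_toNNReal _ hLU.le]
      exact hU x y
    exact this.continuous
  -- Step 1: all time slices are (weakly) monotone.
  have mono_all : ∀ s : ℝ, 0 ≤ s → ∀ z₁ z₂ : ℝ, 0 ≤ z₁ → z₁ ≤ z₂ → z₂ ≤ 1 →
      X z₁ s ≤ X z₂ s := by
    intro s hs z₁ z₂ hz₁ hz12 hz₂
    rcases eq_or_lt_of_le hz12 with rfl | hlt
    · exact le_rfl
    have hz₁m : z₁ ∈ Icc (0:ℝ) 1 := ⟨hz₁, hz12.trans hz₂⟩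
    have hz₂m : z₂ ∈ Icc (0:ℝ) 1 := ⟨hz₁.trans hz12, hz₂⟩
    have hcont : ContinuousOn (fun τ => X z₁ τ - X z₂ τ) (Icc 0 s) := fun τ hτ =>
      (((hode z₁ hz₁m τ hτ.1).sub (hode z₂ hz₂m τ hτ.1)).continuousAt).continuousWithinAt
    have hder : ∀ x ∈ Ico (0:ℝ) s,
        HasDerivWithinAt (fun τ => X z₁ τ - X z₂ τ)
          ((fun x => v ((∫ ζ in (0:ℝ)..1, U (X z₁ x - X ζ x)) - lam * z₁) -
            v ((∫ ζ in (0:ℝ)..1, U (X z₂ x - X ζ x)) - lam * z₂)) x) (Ici x) x := fun x hx =>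
      ((hode z₁ hz₁m x hx.1).sub (hode z₂ hz₂m x hx.1)).hasDerivWithinAt
    have ha : X z₁ 0 - X z₂ 0 ≤ (fun _ : ℝ => (0:ℝ)) 0 := by
      have := hinit hz₁m hz₂m hz12
      simpa using sub_nonpos.mpr this
    have bound : ∀ x ∈ Ico (0:ℝ) s, X z₁ x - X z₂ x = (fun _ : ℝ => (0:ℝ)) x →
        v ((∫ ζ in (0:ℝ)..1, U (X z₁ x - X ζ x)) - lam * z₁) -
          v ((∫ ζ in (0:ℝ)..1, U (X z₂ x - X ζ x)) - lam * z₂) < (fun _ : ℝ => (0:ℝ)) x := by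
      intro x _ hfx
      have hXeq : X z₁ x = X z₂ x := by simpa [sub_eq_zero] using hfx
      rw [hXeq]
      set I := ∫ ζ in (0:ℝ)..1, U (X z₂ x - X ζ x) with hI
      have hle : I - lam * z₂ ≤ I - lam * z₁ := by nlinarith
      have := hvdec (I - lam * z₂) (I - lam * z₁) hle
      have hpos : 0 < b * (lam * (z₂ - z₁)) := mul_pos hb (mul_pos hlam (by linarith))
      simp only
      nlinarith
    have := image_le_of_deriv_right_lt_deriv_boundary hcont hder ha
      (fun x => hasDerivAt_const x 0) bound (right_mem_Icc.mpr hs)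
    simpa [sub_nonpos] using this
  -- Step 2: the Lipschitz bound on the difference of the interaction integrals.
  have intBound : ∀ s : ℝ, 0 ≤ s → ∀ w₁ w₂ : ℝ, w₁ ≤ w₂ →
      (∫ ζ in (0:ℝ)..1, U (w₂ - X ζ s)) - (∫ ζ in (0:ℝ)..1, U (w₁ - X ζ s)) ≤
        LU * (w₂ - w₁) := by
    intro s hs w₁ w₂ hw
    set m : ℝ → ℝ := fun ζ => X (min 1 (max 0 ζ)) s with hm
    have hclamp : ∀ ζ : ℝ, min 1 (max 0 ζ) ∈ Icc (0:ℝ) 1 := fun ζ =>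
      ⟨le_min zero_le_one (le_max_left _ _), min_le_left _ _⟩
    have hmmono : Monotone m := by
      intro ζ₁ ζ₂ h
      exact mono_all s hs _ _ (hclamp ζ₁).1
        (min_le_min le_rfl (max_le_max le_rfl h)) (hclamp ζ₂).2
    have hmmeas : Measurable m := hmmono.measurable
    have hbd : ∀ ζ : ℝ, X 0 s ≤ m ζ ∧ m ζ ≤ X 1 s := fun ζ =>
      ⟨mono_all s hs 0 _ le_rfl (hclamp ζ).1 (hclamp ζ).2,
       mono_all s hs _ 1 (hclamp ζ).1 (hclamp ζ).2 le_rfl⟩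
    have hII : ∀ w : ℝ, IntervalIntegrable (fun ζ => U (w - m ζ)) volume 0 1 := by
      intro w
      rw [intervalIntegrable_iff_integrableOn_Ioc_of_le zero_le_one]
      refine Integrable.mono'
        (g := fun _ => |U 0| + LU * (|w| + (|X 0 s| + |X 1 s|)))
        ((integrableOn_const_iff).mpr (Or.inr measure_Ioc_lt_top))
        ((hUcont.measurable.comp (measurable_const.sub hmmeas))).aestronglyMeasurable
        (ae_of_all _ fun ζ => ?_)
      have h1 := hU (w - m ζ) 0
      rw [sub_zero] at h1
      have h2 := (hbd ζ).1
      have h3 := (hbd ζ).2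
      have hmabs : |m ζ| ≤ |X 0 s| + |X 1 s| := by
        rw [abs_le]
        constructor
        · have := neg_abs_le (X 0 s); linarith [le_abs_self (X 1 s), abs_nonneg (X 1 s)]
        · have := le_abs_self (X 1 s); linarith [abs_nonneg (X 0 s)]
      have habs : |w - m ζ| ≤ |w| + (|X 0 s| + |X 1 s|) := by
        calc |w - m ζ| ≤ |w| + |m ζ| := abs_sub _ _
          _ ≤ _ := by linarith
      have h4 := abs_sub_abs_le_abs_sub (U (w - m ζ)) (U 0)
      have h5 : LU * |w - m ζ| ≤ LU * (|w| + (|X 0 s| + |X 1 s|)) :=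
        mul_le_mul_of_nonneg_left habs hLU.le
      rw [Real.norm_eq_abs]
      show |U (w - m ζ)| ≤ |U 0| + LU * (|w| + (|X 0 s| + |X 1 s|))
      linarith
    have hEq : ∀ w : ℝ, EqOn (fun ζ => U (w - X ζ s)) (fun ζ => U (w - m ζ)) (uIcc (0:ℝ) 1) := by
      intro w ζ hζ
      rw [uIcc_of_le zero_le_one] at hζ
      simp only [hm, max_eq_right hζ.1, min_eq_right hζ.2]
    rw [integral_congr (hEq w₂), integral_congr (hEq w₁), ← integral_sub (hII w₂) (hII w₁)]
    have hmono : ∀ ζ ∈ Icc (0:ℝ) 1, U (w₂ - m ζ) - U (w₁ - m ζ) ≤ LU * (w₂ - w₁) := by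
      intro ζ _
      have h1 := hU (w₂ - m ζ) (w₁ - m ζ)
      have h2 : |w₂ - m ζ - (w₁ - m ζ)| = w₂ - w₁ := by
        rw [show w₂ - m ζ - (w₁ - m ζ) = w₂ - w₁ by ring, abs_of_nonneg (by linarith)]
      rw [h2] at h1
      have := le_abs_self (U (w₂ - m ζ) - U (w₁ - m ζ))
      linarith
    calc (∫ ζ in (0:ℝ)..1, (U (w₂ - m ζ) - U (w₁ - m ζ)))
        ≤ ∫ _ in (0:ℝ)..1, LU * (w₂ - w₁) :=
          integral_mono_on zero_le_one ((hII w₂).sub (hII w₁)) intervalIntegrable_const hmono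
      _ = LU * (w₂ - w₁) := by simp
  -- Step 3: differential inequality for the difference of two trajectories.
  have key : ∀ z₁ z₂ : ℝ, 0 ≤ z₁ → z₁ ≤ z₂ → z₂ ≤ 1 → ∀ s : ℝ, 0 ≤ s →
      b * lam * (z₂ - z₁) - Lv * LU * (X z₂ s - X z₁ s) ≤
        v ((∫ ζ in (0:ℝ)..1, U (X z₂ s - X ζ s)) - lam * z₂) -
          v ((∫ ζ in (0:ℝ)..1, U (X z₁ s - X ζ s)) - lam * z₁) := by
    intro z₁ z₂ hz₁ hz12 hz₂ s hs
    set I₁ := ∫ ζ in (0:ℝ)..1, U (X z₁ s - X ζ s) with hI₁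
    set I₂ := ∫ ζ in (0:ℝ)..1, U (X z₂ s - X ζ s) with hI₂
    have hD : 0 ≤ X z₂ s - X z₁ s := sub_nonneg.mpr (mono_all s hs z₁ z₂ hz₁ hz12 hz₂)
    have hmle : X z₁ s ≤ X z₂ s := by linarith
    have hIbound : I₂ - I₁ ≤ LU * (X z₂ s - X z₁ s) := by
      have := intBound s hs (X z₁ s) (X z₂ s) hmle
      simpa [hI₁, hI₂] using this
    rcases le_total (I₂ - lam * z₂) (I₁ - lam * z₁) with hc | hc
    · have h1 := hvdec (I₂ - lam * z₂) (I₁ - lam * z₁) hc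
      have h2 : b * (I₂ - I₁) ≤ b * (LU * (X z₂ s - X z₁ s)) :=
        mul_le_mul_of_nonneg_left hIbound hb.le
      have h3 : b * (LU * (X z₂ s - X z₁ s)) ≤ Lv * (LU * (X z₂ s - X z₁ s)) :=
        mul_le_mul_of_nonneg_right hbLv (mul_nonneg hLU.le hD)
      nlinarith
    · have h1 := hv (I₂ - lam * z₂) (I₁ - lam * z₁)
      have h2 : |I₂ - lam * z₂ - (I₁ - lam * z₁)| = I₂ - lam * z₂ - (I₁ - lam * z₁) :=
        abs_of_nonneg (by linarith)
      rw [h2] at h1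
      have h3 := neg_abs_le (v (I₂ - lam * z₂) - v (I₁ - lam * z₁))
      have h4 : Lv * (I₂ - I₁) ≤ Lv * (LU * (X z₂ s - X z₁ s)) :=
        mul_le_mul_of_nonneg_left hIbound hLv.le
      have h5 : b * (lam * (z₂ - z₁)) ≤ Lv * (lam * (z₂ - z₁)) :=
        mul_le_mul_of_nonneg_right hbLv (mul_nonneg hlam.le (by linarith))
      nlinarith
  -- Step 4: the quantitative lower bound via comparison with the exponential barrier.
  have main : ∀ t : ℝ, 0 ≤ t → ∀ z₁ z₂ : ℝ, 0 ≤ z₁ → z₁ ≤ z₂ → z₂ ≤ 1 →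
      b * lam * (z₂ - z₁) / (Lv * LU) * (1 - Real.exp (-(Lv * LU) * t)) ≤
        X z₂ t - X z₁ t := by
    intro t ht z₁ z₂ hz₁ hz12 hz₂
    set K := Lv * LU with hK
    have hK0 : 0 < K := mul_pos hLv hLU
    set c := b * lam * (z₂ - z₁) with hc
    refine le_of_forall_sub_le fun ε hε => ?_
    have ht1 : 0 < 1 + t := by linarith
    set ε' := ε / (1 + t) with hε'
    have hε'0 : 0 < ε' := div_pos hε ht1
    set B : ℝ → ℝ := fun s => -(c / K * (1 - Real.exp (-K * s))) + ε' * (1 + s) with hB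
    set B' : ℝ → ℝ := fun s => -(c * Real.exp (-K * s)) + ε' with hB'
    have hDB : ∀ x : ℝ, HasDerivAt B (B' x) x := by
      intro x
      have h1 : HasDerivAt (fun s : ℝ => -K * s) (-K) x := by
        simpa using (hasDerivAt_id x).const_mul (-K)
      have h2 := h1.exp
      have h3 : HasDerivAt (fun s : ℝ => c / K * (1 - Real.exp (-K * s)))
          (c / K * (0 - Real.exp (-K * x) * -K)) x :=
        ((hasDerivAt_const x (1:ℝ)).sub h2).const_mul (c / K)
      have h4 : HasDerivAt (fun s : ℝ => ε' * (1 + s)) (ε' * (0 + 1)) x :=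
        ((hasDerivAt_const x (1:ℝ)).add (hasDerivAt_id x)).const_mul ε'
      have h5 := (h3.neg).add h4
      refine h5.congr_deriv ?_
      simp only [hB']
      field_simp
      ring
    have hz₁m : z₁ ∈ Icc (0:ℝ) 1 := ⟨hz₁, hz12.trans hz₂⟩
    have hz₂m : z₂ ∈ Icc (0:ℝ) 1 := ⟨hz₁.trans hz12, hz₂⟩
    have hcont : ContinuousOn (fun τ => X z₁ τ - X z₂ τ) (Icc 0 t) := fun τ hτ =>
      (((hode z₁ hz₁m τ hτ.1).sub (hode z₂ hz₂m τ hτ.1)).continuousAt).continuousWithinAt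
    have hder : ∀ x ∈ Ico (0:ℝ) t,
        HasDerivWithinAt (fun τ => X z₁ τ - X z₂ τ)
          ((fun x => v ((∫ ζ in (0:ℝ)..1, U (X z₁ x - X ζ x)) - lam * z₁) -
            v ((∫ ζ in (0:ℝ)..1, U (X z₂ x - X ζ x)) - lam * z₂)) x) (Ici x) x := fun x hx =>
      ((hode z₁ hz₁m x hx.1).sub (hode z₂ hz₂m x hx.1)).hasDerivWithinAt
    have ha : X z₁ 0 - X z₂ 0 ≤ B 0 := by
      have h0 := hinit hz₁m hz₂m hz12
      have hB0 : B 0 = ε' := by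
        simp [hB, Real.exp_zero]
      rw [hB0]
      simp only at h0
      linarith
    have bound : ∀ x ∈ Ico (0:ℝ) t, X z₁ x - X z₂ x = B x →
        v ((∫ ζ in (0:ℝ)..1, U (X z₁ x - X ζ x)) - lam * z₁) -
          v ((∫ ζ in (0:ℝ)..1, U (X z₂ x - X ζ x)) - lam * z₂) < B' x := by
      intro x hx hfB
      have hkey := key z₁ z₂ hz₁ hz12 hz₂ x hx.1
      rw [← hc] at hkey
      have hDx : X z₂ x - X z₁ x = c / K * (1 - Real.exp (-K * x)) - ε' * (1 + x) := by
        simp only [hB] at hfB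
        linarith
      have hKD : K * (X z₂ x - X z₁ x) =
          c * (1 - Real.exp (-K * x)) - K * (ε' * (1 + x)) := by
        rw [hDx]
        field_simp
      have hpos : 0 ≤ K * (ε' * (1 + x)) := by
        have : (0:ℝ) ≤ 1 + x := by linarith [hx.1]
        positivity
      simp only [hB']
      nlinarith
    have hcomp := image_le_of_deriv_right_lt_deriv_boundary hcont hder ha hDB bound
      (right_mem_Icc.mpr ht)
    have hε't : ε' * (1 + t) = ε := by
      rw [hε']
      field_simp
    simp only [hB] at hcomp
    linarith
  -- Assemble the conclusion.
  intro t ht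
  have hK0 : 0 < Lv * LU := mul_pos hLv hLU
  constructor
  · intro z₁ z₂ hz₁ hlt hz₂
    exact main t ht.le z₁ z₂ hz₁ hlt.le hz₂
  · intro z₁ hz₁m z₂ hz₂m hlt
    have h := main t ht.le z₁ z₂ hz₁m.1 hlt.le hz₂m.2
    have he : Real.exp (-(Lv * LU) * t) < 1 := by
      rw [Real.exp_lt_one_iff]
      nlinarith
    have hpos : 0 < b * lam * (z₂ - z₁) / (Lv * LU) * (1 - Real.exp (-(Lv * LU) * t)) := by
      have h1 : 0 < b * lam * (z₂ - z₁) := mul_pos (mul_pos hb hlam) (by linarith)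
      have h2 : 0 < 1 - Real.exp (-(Lv * LU) * t) := by linarith
      positivity
    simp only
    linarith
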